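/- Let P be a finite graded poset of rank r, let g be a positive labeling of P, let a₀, …, a_r be positive reals, and let 0 ≤ i ≤ r. Then ρτ_i((a₀,…,a_r) ♭ g) = (a₀, …, a_{i-1}, 1/(a₀a₁⋯a_r), a_{i+1}, …, a_r) ♭ ρτ_i(g); that is, applying the antichain rank toggle ρτ_i to the graded rescaling of g by (a₀,…,a_r) yields the graded rescaling of ρτ_i(g) by the vector obtained from (a₀,…,a_r) by replacing its i-th entry with 1/(a₀a₁⋯a_r). -/

import Mathlib

/-!
Birational (commutative) antichain/order rowmotion on a finite poset `P`, with labels in `ℝ`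
and positive labelings, following Joseph–Roby, "Birational and noncommutative lifts of
antichain toggling and rowmotion".
-/

open Finset

attribute [local instance] Classical.propDecidable

variable {P : Type*} [Fintype P] [PartialOrder P]

/-- `c` is a saturated chain in `P`: consecutive entries are covers. -/
def SatChain {P : Type*} [PartialOrder P] {k : ℕ} (c : Fin (k + 1) → P) : Prop :=
  ∀ i : Fin k, c i.castSucc ⋖ c i.succ

/-- `c` is a maximal chain of `P`: a saturated chain from a minimal element to a maximal
element of `P` (equivalently, the restriction to `P` of a maximal chain
`0̂ ⋖ y₁ ⋖ ⋯ ⋖ y_k ⋖ 1̂` of `P̂`). -/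
def MaxChain {P : Type*} [PartialOrder P] {k : ℕ} (c : Fin (k + 1) → P) : Prop :=
  SatChain c ∧ IsMin (c 0) ∧ IsMax (c (Fin.last k))

/-- `Υ_v(g)`: the sum over all maximal chains `(y₁, …, y_k)` of `P` through `v` of the
products `g(y₁)⋯g(y_k)` of the labels along the chain. -/
noncomputable def Upsilon (g : P → ℝ) (v : P) : ℝ :=
  ∑ k ∈ range (Fintype.card P),
    ∑ c ∈ univ.filter (fun c : Fin (k + 1) → P => MaxChain c ∧ ∃ j, c j = v),
      (List.ofFn (g ∘ c)).prod

/-- The birational antichain toggle `τ_v`: it replaces the label at `v` by `C / Υ_v(g)` and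
fixes all other labels. -/
noncomputable def atog (C : ℝ) (v : P) (g : P → ℝ) : P → ℝ :=
  fun x => if x = v then C / Upsilon g v else g x

/-- `∑_{y ∈ P̂, y ⋖ x} f(y)`, with the convention `f(0̂) = 1` (the unique lower cover in
`P̂` of a minimal element of `P` is `0̂`). -/
noncomputable def lowSum (f : P → ℝ) (x : P) : ℝ :=
  (if IsMin x then 1 else 0) + ∑ y ∈ univ.filter (fun y => y ⋖ x), f y

/-- `∑_{y ∈ P̂, y ⋗ x} 1/f(y)`, with the convention `f(1̂) = C`. -/
noncomputable def upInvSum (C : ℝ) (f : P → ℝ) (x : P) : ℝ :=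
  (if IsMax x then 1 / C else 0) + ∑ y ∈ univ.filter (fun y => x ⋖ y), 1 / f y

/-- The birational order toggle `T_v`: it replaces the label at `v` by
`(∑_{y ∈ P̂, y ⋖ v} f(y)) / (f(v) · ∑_{y ∈ P̂, y ⋗ v} 1/f(y))` (with `f(0̂) = 1`,
`f(1̂) = C`) and fixes all other labels. -/
noncomputable def otog (C : ℝ) (v : P) (f : P → ℝ) : P → ℝ :=
  fun x => if x = v then lowSum f v / (f v * upInvSum C f v) else f x

/-- The birational complement map `Θ`: `(Θf)(x) = C / f(x)`. -/
noncomputable def thetaMap (C : ℝ) (f : P → ℝ) : P → ℝ := fun x => C / f x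

/-- The birational down transfer `∇`: `(∇f)(x) = f(x) / ∑_{y ∈ P̂, y ⋖ x} f(y)` with
`f(0̂) = 1`. -/
noncomputable def nablaMap (f : P → ℝ) : P → ℝ := fun x => f x / lowSum f x

/-- The birational inverse up transfer `Δ⁻¹`: `(Δ⁻¹f)(x)` is the sum, over all saturated
chains `x = y₁ ⋖ y₂ ⋖ ⋯ ⋖ y_k ⋖ 1̂` in `P̂` (i.e. saturated chains of `P` starting at `x`
and ending at a maximal element of `P`), of `f(y₁)f(y₂)⋯f(y_k)`. -/
noncomputable def deltaInvMap (f : P → ℝ) : P → ℝ := fun x =>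
  ∑ k ∈ range (Fintype.card P),
    ∑ c ∈ univ.filter (fun c : Fin (k + 1) → P =>
        SatChain c ∧ c 0 = x ∧ IsMax (c (Fin.last k))),
      (List.ofFn (f ∘ c)).prod

/-- `l` is a linear extension of `P`: it lists every element of `P` exactly once, and
`l[i] < l[j]` in `P` implies `i < j`. -/
def IsLinearExtension {P : Type*} [PartialOrder P] (l : List P) : Prop :=
  l.Nodup ∧ (∀ x : P, x ∈ l) ∧
    ∀ (i j : ℕ) (hi : i < l.length) (hj : j < l.length), l[i]'hi < l[j]'hj → i < j

/-- `l` is a linear extension of the subposet `A` of `P`. -/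
def IsLinearExtensionOn {P : Type*} [PartialOrder P] (A : Set P) (l : List P) : Prop :=
  l.Nodup ∧ (∀ x : P, x ∈ l ↔ x ∈ A) ∧
    ∀ (i j : ℕ) (hi : i < l.length) (hj : j < l.length), l[i]'hi < l[j]'hj → i < j

/-- Apply the antichain toggles `τ` along the list `l`, first element of `l` first; for a
linear extension `l = (x₁,…,xₙ)` this is `τ_{xₙ} ∘ ⋯ ∘ τ_{x₂} ∘ τ_{x₁}`, i.e. birational
antichain rowmotion `BAR`. -/
noncomputable def applyATogs (C : ℝ) (l : List P) (g : P → ℝ) : P → ℝ :=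
  l.foldl (fun h v => atog C v h) g

/-- Apply the order toggles `T` along the list `l`, first element of `l` first. -/
noncomputable def applyOTogs (C : ℝ) (l : List P) (f : P → ℝ) : P → ℝ :=
  l.foldl (fun h v => otog C v h) f

/-- `rk` is a rank function exhibiting `P` as a graded poset of rank `r`: minimal elements
have rank `0`, ranks increase by `1` along covers, and maximal elements have rank `r`. -/
def IsRankFunction {P : Type*} [PartialOrder P] (rk : P → ℕ) (r : ℕ) : Prop :=
  (∀ x : P, IsMin x → rk x = 0) ∧ (∀ x y : P, x ⋖ y → rk y = rk x + 1) ∧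
    (∀ x : P, IsMax x → rk x = r)

/-- On a saturated chain starting at a minimal element, the rank equals the index. -/
lemma chain_rk_aux {rk : P → ℕ} {r : ℕ} (hrk : IsRankFunction rk r) {k : ℕ}
    {c : Fin (k + 1) → P} (hc : SatChain c) (h0 : IsMin (c 0)) :
    ∀ j : Fin (k + 1), rk (c j) = j := by
  intro j
  induction j using Fin.induction with
  | zero => exact hrk.1 _ h0
  | succ j ih =>
      rw [hrk.2.1 _ _ (hc j), ih]
      simp

lemma upsilon_scale {rk : P → ℕ} {r i : ℕ} (hrk : IsRankFunction rk r)
    (a : ℕ → ℝ) (b : P → ℝ) (hb1 : ∀ x, rk x ≠ i → b x = a (rk x))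
    {v : P} (hv : rk v = i) (hbv : b v = a i) (h : P → ℝ) :
    Upsilon (fun x => b x * h x) v = (∏ j ∈ range (r + 1), a j) * Upsilon h v := by
  unfold Upsilon
  rw [Finset.mul_sum]
  refine Finset.sum_congr rfl fun k _ => ?_
  rw [Finset.mul_sum]
  refine Finset.sum_congr rfl fun c hc => ?_
  obtain ⟨⟨hsat, hmin, hmaxc⟩, j₀, hj₀⟩ := (Finset.mem_filter.mp hc).2
  have hrkc := chain_rk_aux hrk hsat hmin
  have hkr : k = r := by
    have h1 := hrk.2.2 _ hmaxc
    have h2 := hrkc (Fin.last k)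
    rw [h1] at h2; simpa using h2.symm
  rw [← hkr]
  have hj₀i : (j₀ : ℕ) = i := by rw [← hrkc j₀, hj₀]; exact hv
  have hcoef : ∀ j : Fin (k + 1), b (c j) = a (j : ℕ) := by
    intro j
    by_cases hji : rk (c j) = i
    · have hjv : (j : ℕ) = i := by rw [← hrkc j]; exact hji
      have hj : j = j₀ := Fin.ext (by rw [hjv, hj₀i])
      rw [hj, hj₀, hbv, hj₀i]
    · rw [hb1 _ hji, hrkc j]
  rw [List.prod_ofFn, List.prod_ofFn]
  simp only [Function.comp_apply]
  rw [Finset.prod_mul_distrib]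
  congr 1
  exact (Finset.prod_congr rfl fun j _ => hcoef j).trans
    (Fin.prod_univ_eq_prod_range (fun j => a j) (k + 1))

lemma atog_scale (C : ℝ) {rk : P → ℕ} {r i : ℕ} (hrk : IsRankFunction rk r)
    (a : ℕ → ℝ) (b : P → ℝ) (hb1 : ∀ x, rk x ≠ i → b x = a (rk x))
    {v : P} (hv : rk v = i) (hbv : b v = a i) (h : P → ℝ) :
    atog C v (fun x => b x * h x)
      = fun x => Function.update b v (∏ j ∈ range (r + 1), a j)⁻¹ x * atog C v h x := by
  funext x
  unfold atog
  by_cases hx : x = v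
  · subst hx
    rw [if_pos rfl, if_pos rfl, Function.update_self,
      upsilon_scale hrk a b hb1 hv hbv h, div_eq_mul_inv, div_eq_mul_inv, mul_inv]
    ring
  · rw [if_neg hx, if_neg hx, Function.update_of_ne hx]

lemma applyATogs_scale (C : ℝ) {rk : P → ℕ} {r i : ℕ} (hrk : IsRankFunction rk r)
    (a : ℕ → ℝ) :
    ∀ (l : List P) (D : P → Prop) (b : P → ℝ), l.Nodup → (∀ x ∈ l, rk x = i) →
      (∀ x, D x → rk x = i) → (∀ x ∈ l, ¬ D x) →
      (∀ x, ¬ D x → b x = a (rk x)) →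
      (∀ x, D x → b x = (∏ j ∈ range (r + 1), a j)⁻¹) → ∀ h : P → ℝ,
      applyATogs C l (fun x => b x * h x)
        = fun x =>
            (l.foldl (fun f v => Function.update f v (∏ j ∈ range (r + 1), a j)⁻¹) b) x
              * applyATogs C l h x := by
  intro l
  induction l with
  | nil => intro D b _ _ _ _ _ _ h; rfl
  | cons v t ih =>
      intro D b hnd hrkl hD hDl hb1 hb2 h
      have hv : rk v = i := hrkl v (by simp)
      have hvD : ¬ D v := hDl v (by simp)
      have hfold : ∀ f : P → ℝ, applyATogs C (v :: t) f = applyATogs C t (atog C v f) :=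
        fun f => rfl
      rw [hfold, hfold,
        atog_scale C hrk a b (fun x hx => hb1 x (fun hDx => hx (hD x hDx))) hv
          (by rw [hb1 v hvD, hv]) h]
      exact ih (fun x => D x ∨ x = v) (Function.update b v (∏ j ∈ range (r + 1), a j)⁻¹)
        ((List.nodup_cons.mp hnd).2)
        (fun x hx => hrkl x (List.mem_cons_of_mem _ hx))
        (by rintro x (hx | rfl); exacts [hD x hx, hv])
        (by
          intro x hx
          rintro (hDx | rfl)
          · exact hDl x (List.mem_cons_of_mem _ hx) hDx
          · exact (List.nodup_cons.mp hnd).1 hx)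
        (by
          intro x hx
          have h1 : ¬ D x := fun h' => hx (Or.inl h')
          have h2 : x ≠ v := fun h' => hx (Or.inr h')
          rw [Function.update_of_ne h2]
          exact hb1 x h1)
        (by
          rintro x (hDx | rfl)
          · have hxv : x ≠ v := fun h' => hvD (h' ▸ hDx)
            rw [Function.update_of_ne hxv]
            exact hb2 x hDx
          · exact Function.update_self _ _ _)
        (atog C v h)

lemma foldl_update_eq (A : ℝ) :
    ∀ (l : List P) (b : P → ℝ) (x : P),
      (l.foldl (fun f v => Function.update f v A) b) x = if x ∈ l then A else b x := by
  intro l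
  induction l with
  | nil => intro b x; simp
  | cons v t ih =>
      intro b x
      have hfold : (v :: t).foldl (fun f v => Function.update f v A) b
          = t.foldl (fun f v => Function.update f v A) (Function.update b v A) := rfl
      rw [hfold, ih]
      by_cases hx : x ∈ t
      · rw [if_pos hx, if_pos (List.mem_cons_of_mem _ hx)]
      · rw [if_neg hx]
        by_cases hxv : x = v
        · subst hxv
          rw [Function.update_self, if_pos List.mem_cons_self]
        · rw [Function.update_of_ne hxv, if_neg (by simp [hx, hxv])]

/-- Let `P` be a finite graded poset of rank `r`, `g` a positive
labeling, `a₀,…,a_r` positive reals and `0 ≤ i ≤ r`.  Then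
`ρτ_i((a₀,…,a_r) ♭ g) = (a₀,…,a_{i-1}, 1/(a₀a₁⋯a_r), a_{i+1},…,a_r) ♭ ρτ_i(g)`,
where `(a₀,…,a_r) ♭ g` multiplies the label of each element of rank `j` by `a_j`, and
`ρτ_i` is the product of the (commuting) antichain toggles at the rank-`i` elements,
realized along a list `li` of the rank-`i` elements. -/
theorem rank_atog_graded_rescaling (C : ℝ) (hC : 0 < C)
    (rk : P → ℕ) (r : ℕ) (hrk : IsRankFunction rk r)
    (i : ℕ) (hi : i ≤ r)
    (li : List P) (hli : li.Nodup ∧ ∀ x : P, x ∈ li ↔ rk x = i)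
    (a : ℕ → ℝ) (ha : ∀ j, 0 < a j)
    (g : P → ℝ) (hg : ∀ x, 0 < g x) :
    applyATogs C li (fun x => a (rk x) * g x)
      = fun x =>
          (if rk x = i then (∏ j ∈ range (r + 1), a j)⁻¹ else a (rk x))
            * applyATogs C li g x := by
  have key := applyATogs_scale C hrk a li (fun _ => False) (fun x => a (rk x)) hli.1
    (fun x hx => (hli.2 x).mp hx) (fun x hx => hx.elim) (fun x _ => not_false)
    (fun x _ => rfl) (fun x hx => hx.elim) g
  refine key.trans ?_
  funext x
  congr 1
  rw [foldl_update_eq]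
  exact if_congr (hli.2 x) rfl rfl
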